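/- Consider the mixing rewriting relation on finite multisets of rationals (replacing two elements a, b by two copies of (a+b)/2). Let M₀ consist of i copies of 0 and j copies of 1. If a multiset reachable from M₀ contains an element c with 1 - 2^{-γ} < c < 1 for some integer γ ≥ 0, then j ≥ γ + 1. -/

import Mathlib

def MixStep (M N : Multiset ℚ) : Prop :=
  ∃ a b : ℚ, ∃ R : Multiset ℚ,
    M = a ::ₘ b ::ₘ R ∧ N = (a + b)/2 ::ₘ (a + b)/2 ::ₘ R

def MixInv (j : ℕ) (M : Multiset ℚ) : Prop :=
  Multiset.count 1 M ≤ j ∧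
    ∀ x ∈ M, x = 1 ∨ x ≤ 1 - ((2:ℚ)^(j - Multiset.count 1 M))⁻¹

lemma bound_mono {n m : ℕ} (h : n ≤ m) :
    (1:ℚ) - ((2:ℚ)^n)⁻¹ ≤ 1 - ((2:ℚ)^m)⁻¹ := by
  have h1 : (2:ℚ)^n ≤ 2^m := by
    apply pow_le_pow_right₀ (by norm_num) h
  have h2 : ((2:ℚ)^m)⁻¹ ≤ ((2:ℚ)^n)⁻¹ := by
    apply inv_anti₀ (by positivity) h1
  linarith

lemma half_step {e : ℕ} {b : ℚ} (hb : b ≤ 1 - ((2:ℚ)^e)⁻¹) :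
    (1 + b)/2 ≤ 1 - ((2:ℚ)^(e+1))⁻¹ := by
  have h : ((2:ℚ)^(e+1))⁻¹ = ((2:ℚ)^e)⁻¹ / 2 := by
    rw [pow_succ, mul_inv]; ring
  rw [h]; linarith

lemma bound_lt_one (e : ℕ) : (1:ℚ) - ((2:ℚ)^e)⁻¹ < 1 := by
  have : (0:ℚ) < ((2:ℚ)^e)⁻¹ := by positivity
  linarith

lemma inv_step {j : ℕ} {M N : Multiset ℚ} (hM : MixInv j M) (h : MixStep M N) : MixInv j N := by
  obtain ⟨a, b, R, rfl, rfl⟩ := h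
  obtain ⟨hcount, hmem⟩ := hM
  by_cases ha : a = 1 <;> by_cases hb : b = 1
  · subst ha; subst hb
    have h1 : ((1:ℚ) + 1)/2 = 1 := by norm_num
    rw [h1]
    exact ⟨hcount, hmem⟩
  · -- a = 1, b ≠ 1
    subst ha
    have hkM : Multiset.count 1 ((1:ℚ) ::ₘ b ::ₘ R) = Multiset.count 1 R + 1 := by
      simp [Multiset.count_cons, hb, Ne.symm hb]
    set kR := Multiset.count 1 R with hkR
    have hkj : kR + 1 ≤ j := by rw [hkM] at hcount; exact hcount
    have hbbound : b ≤ 1 - ((2:ℚ)^(j - (kR + 1)))⁻¹ := by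
      have := hmem b (by simp)
      rcases this with h1 | h1
      · exact absurd h1 hb
      · rwa [hkM] at h1
    have hblt1 : b < 1 := lt_of_le_of_lt hbbound (bound_lt_one _)
    have hm1 : (1 + b)/2 < 1 := by linarith
    have hmne : (1 + b)/2 ≠ 1 := ne_of_lt hm1
    have hkN : Multiset.count 1 (((1:ℚ) + b)/2 ::ₘ ((1:ℚ) + b)/2 ::ₘ R) = kR := by
      simp [Multiset.count_cons, hmne, Ne.symm hmne, hkR]
    have hexp : j - kR = (j - (kR + 1)) + 1 := by omega
    constructor
    · rw [hkN]; omega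
    · intro x hx
      rw [hkN, hexp]
      rcases Multiset.mem_cons.mp hx with rfl | hx
      · right; exact half_step hbbound
      rcases Multiset.mem_cons.mp hx with rfl | hx
      · right; exact half_step hbbound
      · rcases hmem x (by simp [hx]) with h1 | h1
        · left; exact h1
        · right
          rw [hkM] at h1
          exact le_trans h1 (bound_mono (by omega))
  · -- b = 1, a ≠ 1
    subst hb
    have hkM : Multiset.count 1 (a ::ₘ (1:ℚ) ::ₘ R) = Multiset.count 1 R + 1 := by
      simp [Multiset.count_cons, ha, Ne.symm ha]
    set kR := Multiset.count 1 R with hkR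
    have hkj : kR + 1 ≤ j := by rw [hkM] at hcount; exact hcount
    have habound : a ≤ 1 - ((2:ℚ)^(j - (kR + 1)))⁻¹ := by
      have := hmem a (by simp)
      rcases this with h1 | h1
      · exact absurd h1 ha
      · rwa [hkM] at h1
    have halt1 : a < 1 := lt_of_le_of_lt habound (bound_lt_one _)
    have hm1 : (a + 1)/2 < 1 := by linarith
    have hmne : (a + 1)/2 ≠ 1 := ne_of_lt hm1
    have hkN : Multiset.count 1 ((a + (1:ℚ))/2 ::ₘ (a + (1:ℚ))/2 ::ₘ R) = kR := by
      simp [Multiset.count_cons, hmne, Ne.symm hmne, hkR]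
    have hexp : j - kR = (j - (kR + 1)) + 1 := by omega
    have hmb : (a + 1)/2 ≤ 1 - ((2:ℚ)^((j - (kR+1)) + 1))⁻¹ := by
      have := half_step habound
      linarith [half_step habound]
    constructor
    · rw [hkN]; omega
    · intro x hx
      rw [hkN, hexp]
      rcases Multiset.mem_cons.mp hx with rfl | hx
      · right; exact hmb
      rcases Multiset.mem_cons.mp hx with rfl | hx
      · right; exact hmb
      · rcases hmem x (by simp [hx]) with h1 | h1
        · left; exact h1
        · right
          rw [hkM] at h1
          exact le_trans h1 (bound_mono (by omega))
  · -- a ≠ 1, b ≠ 1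
    have hkM : Multiset.count 1 (a ::ₘ b ::ₘ R) = Multiset.count 1 R := by
      simp [Multiset.count_cons, Ne.symm ha, Ne.symm hb]
    set kR := Multiset.count 1 R with hkR
    have habound : a ≤ 1 - ((2:ℚ)^(j - kR))⁻¹ := by
      rcases hmem a (by simp) with h1 | h1
      · exact absurd h1 ha
      · rwa [hkM] at h1
    have hbbound : b ≤ 1 - ((2:ℚ)^(j - kR))⁻¹ := by
      rcases hmem b (by simp) with h1 | h1
      · exact absurd h1 hb
      · rwa [hkM] at h1
    have hmb : (a + b)/2 ≤ 1 - ((2:ℚ)^(j - kR))⁻¹ := by linarith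
    have hmne : (a + b)/2 ≠ 1 :=
      ne_of_lt (lt_of_le_of_lt hmb (bound_lt_one _))
    have hkN : Multiset.count 1 ((a + b)/2 ::ₘ (a + b)/2 ::ₘ R) = kR := by
      simp [Multiset.count_cons, hmne, Ne.symm hmne, hkR]
    constructor
    · rw [hkN]; rw [hkM] at hcount; exact hcount
    · intro x hx
      rw [hkN]
      rcases Multiset.mem_cons.mp hx with rfl | hx
      · right; exact hmb
      rcases Multiset.mem_cons.mp hx with rfl | hx
      · right; exact hmb
      · rcases hmem x (by simp [hx]) with h1 | h1
        · left; exact h1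
        · right; rwa [hkM] at h1

lemma inv_init (i j : ℕ) : MixInv j (Multiset.replicate i (0:ℚ) + Multiset.replicate j 1) := by
  have hk : Multiset.count 1 (Multiset.replicate i (0:ℚ) + Multiset.replicate j 1) = j := by
    simp [Multiset.count_replicate]
  constructor
  · rw [hk]
  · intro x hx
    rw [Multiset.mem_add] at hx
    rcases hx with hx | hx
    · right
      have hx0 : x = 0 := Multiset.eq_of_mem_replicate hx
      rw [hk, hx0]
      simp
    · left; exact Multiset.eq_of_mem_replicate hx

theorem stmt_13 (i j : ℕ) (M : Multiset ℚ)
    (h : Relation.ReflTransGen MixStep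
      (Multiset.replicate i 0 + Multiset.replicate j 1) M)
    (c : ℚ) (hc : c ∈ M) (γ : ℕ) (hc1 : 1 - 1/2^γ < c) (hc2 : c < 1) :
    γ + 1 ≤ j := by
  have hinv : MixInv j M := by
    clear hc hc1 hc2
    induction h with
    | refl => exact inv_init i j
    | tail _ hstep ih => exact inv_step ih hstep
  obtain ⟨hcount, hmem⟩ := hinv
  rcases hmem c hc with rfl | hcb
  · exact absurd hc2 (lt_irrefl 1)
  · have h1 : (1:ℚ) - ((2:ℚ)^(j - Multiset.count 1 M))⁻¹ ≤ 1 - ((2:ℚ)^j)⁻¹ :=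
      bound_mono (Nat.sub_le j _)
    rw [one_div] at hc1
    have h2 : (1:ℚ) - ((2:ℚ)^γ)⁻¹ < 1 - ((2:ℚ)^j)⁻¹ := by linarith
    by_contra hle
    push_neg at hle
    have hjγ : j ≤ γ := by omega
    have := bound_mono (show j ≤ γ from hjγ)
    linarith
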